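/- Let n ≥ 1, let a, b, Y, v ∈ ℝⁿ with b_i ≥ 0 and Y_i ≥ 0 for all i, and let K be a real n×n matrix such that |v_i| ≤ ∑_{j=1}^n K_{ij} Y_j for every i. Define N = diag(a) − Kᵀ diag(b) K. Then ∑_{i=1}^n a_i Y_i² − ∑_{i=1}^n b_i v_i² ≥ Yᵀ N Y. In particular, if N is positive semidefinite, then ∑_{i=1}^n a_i Y_i² − ∑_{i=1}^n b_i v_i² ≥ 0. -/

import Mathlib

open Matrix

lemma quad_eq (n : ℕ) (a b Y : Fin n → ℝ) (K : Matrix (Fin n) (Fin n) ℝ) :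
    Y ⬝ᵥ ((Matrix.diagonal a - Kᵀ * Matrix.diagonal b * K) *ᵥ Y)
      = ∑ i, a i * (Y i) ^ 2 - ∑ i, b i * (∑ j, K i j * Y j) ^ 2 := by
  have h1 : (Kᵀ * Matrix.diagonal b * K) *ᵥ Y
      = Kᵀ *ᵥ (Matrix.diagonal b *ᵥ (K *ᵥ Y)) := by
    rw [← mulVec_mulVec, ← mulVec_mulVec]
  have h2 : Y ⬝ᵥ (Matrix.diagonal a *ᵥ Y) = ∑ i, a i * (Y i) ^ 2 := by
    simp [dotProduct, mulVec_diagonal, pow_two]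
    exact Finset.sum_congr rfl fun i _ => by ring
  rw [sub_mulVec, dotProduct_sub, h1, h2, dotProduct_mulVec, vecMul_transpose]
  congr 1
  simp only [dotProduct, mulVec_diagonal, mulVec]
  exact Finset.sum_congr rfl fun i _ => by simp [diagonal_apply, ite_mul]; ring

theorem stmt_1 (n : ℕ) (hn : 1 ≤ n) (a b Y v : Fin n → ℝ)
    (hb : ∀ i, 0 ≤ b i) (hY : ∀ i, 0 ≤ Y i)
    (K : Matrix (Fin n) (Fin n) ℝ)
    (hv : ∀ i, |v i| ≤ ∑ j, K i j * Y j) :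
    (∑ i, a i * (Y i) ^ 2 - ∑ i, b i * (v i) ^ 2
      ≥ Y ⬝ᵥ ((Matrix.diagonal a - Kᵀ * Matrix.diagonal b * K) *ᵥ Y)) ∧
    ((Matrix.diagonal a - Kᵀ * Matrix.diagonal b * K).PosSemidef →
      ∑ i, a i * (Y i) ^ 2 - ∑ i, b i * (v i) ^ 2 ≥ 0) := by
  have key : ∑ i, a i * (Y i) ^ 2 - ∑ i, b i * (v i) ^ 2
      ≥ Y ⬝ᵥ ((Matrix.diagonal a - Kᵀ * Matrix.diagonal b * K) *ᵥ Y) := by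
    rw [quad_eq]
    have : ∀ i, b i * (v i) ^ 2 ≤ b i * (∑ j, K i j * Y j) ^ 2 := fun i => by
      apply mul_le_mul_of_nonneg_left _ (hb i)
      rw [← sq_abs (v i)]
      exact pow_le_pow_left₀ (abs_nonneg _) (hv i) 2
    have hsum : ∑ i, b i * (v i) ^ 2 ≤ ∑ i, b i * (∑ j, K i j * Y j) ^ 2 :=
      Finset.sum_le_sum fun i _ => this i
    linarith
  refine ⟨key, fun hpsd => ?_⟩
  have := hpsd.dotProduct_mulVec_nonneg Y
  simp only [RCLike.star_def, star_trivial] at this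
  linarith [le_trans this key]
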